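/- Let f : (ℕ→ℕ) → Set (ℕ→ℕ) be a problem. The following are equivalent: (1) there exists a first-order problem g : (ℕ→ℕ) → Set ℕ such that g ≤_W* f and g is discontinuous; (2) there exist a point a and a sequence (a_n) in Baire space with a_n → a, such that a ∈ dom f, a_n ∈ dom f for every n, and the restriction of f to S = {a_n | n ∈ ℕ} ∪ {a} is discontinuous (i.e. there is no F : (ℕ→ℕ) → (ℕ→ℕ) continuous on S with F x ∈ f x for all x ∈ S); (3) ACC_ℕ ≤_W* f. -/

import Mathlib

/-- The domain of a problem (multivalued function on Baire space). -/
def domP (f : (ℕ → ℕ) → Set (ℕ → ℕ)) : Set (ℕ → ℕ) := {p | f p ≠ ∅}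

/-- The domain of a first-order problem. -/
def domFO (f : (ℕ → ℕ) → Set ℕ) : Set (ℕ → ℕ) := {p | f p ≠ ∅}

/-- The problem `ACC_ℕ`: on inputs taking at most one nonzero value, find a number
not enumerated (where `p k = n + 1` means `n` is enumerated); empty elsewhere. -/
def ACCN (p : ℕ → ℕ) : Set ℕ :=
  {n | (∀ i j, p i ≠ 0 → p j ≠ 0 → p i = p j) ∧ ∀ k, p k ≠ n + 1}

/-- Continuous Weihrauch reducibility of a first-order problem `g` to a problem `f`. -/
def RedFO (g : (ℕ → ℕ) → Set ℕ) (f : (ℕ → ℕ) → Set (ℕ → ℕ)) : Prop :=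
  ∃ (H : (ℕ → ℕ) → (ℕ → ℕ)) (K : (ℕ → ℕ) × (ℕ → ℕ) → ℕ),
    ContinuousOn H (domFO g) ∧
    ContinuousOn K {pq : (ℕ → ℕ) × (ℕ → ℕ) | pq.1 ∈ domFO g ∧ pq.2 ∈ f (H pq.1)} ∧
    (∀ p ∈ domFO g, H p ∈ domP f) ∧
    (∀ p ∈ domFO g, ∀ q ∈ f (H p), K (p, q) ∈ g p)

/-- Continuity of a first-order problem: it has a choice function continuous on its domain. -/
def FOContinuous (g : (ℕ → ℕ) → Set ℕ) : Prop :=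
  ∃ F : (ℕ → ℕ) → ℕ, ContinuousOn F (domFO g) ∧ ∀ p ∈ domFO g, F p ∈ g p

/-- `f` restricted to some convergent sequence (together with its limit) inside
its domain is discontinuous. -/
def DiscOnSeq (f : (ℕ → ℕ) → Set (ℕ → ℕ)) : Prop :=
  ∃ (a : ℕ → ℕ) (aseq : ℕ → (ℕ → ℕ)),
    Filter.Tendsto aseq Filter.atTop (nhds a) ∧
    a ∈ domP f ∧ (∀ n, aseq n ∈ domP f) ∧
    ¬ ∃ F : (ℕ → ℕ) → (ℕ → ℕ),
        ContinuousOn F (Set.range aseq ∪ {a}) ∧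
        ∀ x ∈ Set.range aseq ∪ {a}, F x ∈ f x

open Filter Topology Set
open scoped Classical

noncomputable section


/-- cylinder of a finite list -/
def cylL (σ : List ℕ) : Set (ℕ → ℕ) := {q | ∀ i, (h : i < σ.length) → q i = σ[i]}

def pref (q : ℕ → ℕ) (m : ℕ) : List ℕ := (List.range m).map q

@[simp] lemma pref_length (q : ℕ → ℕ) (m : ℕ) : (pref q m).length = m := by
  simp [pref]

lemma pref_getElem (q : ℕ → ℕ) {m i : ℕ} (h : i < m) :
    (pref q m)[i]'(by simpa using h) = q i := by
  simp [pref]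

lemma mem_cylL_pref {q' q : ℕ → ℕ} {m : ℕ} :
    q' ∈ cylL (pref q m) ↔ ∀ i < m, q' i = q i := by
  constructor
  · intro h i hi
    have := h i (by simpa using hi)
    rwa [pref_getElem q hi] at this
  · intro h i hi
    have hi' : i < m := by simpa using hi
    rw [pref_getElem q hi']
    exact h i hi'

lemma self_mem_cylL_pref (q : ℕ → ℕ) (m : ℕ) : q ∈ cylL (pref q m) :=
  mem_cylL_pref.2 fun _ _ => rfl

lemma cylL_eq (σ : List ℕ) :
    cylL σ = ⋂ i ∈ Finset.range σ.length, (fun q : ℕ → ℕ => q i) ⁻¹' {σ.getD i 0} := by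
  ext q
  simp only [cylL, mem_setOf_eq, mem_iInter, Finset.mem_range, mem_preimage, mem_singleton_iff]
  constructor
  · intro h i hi
    rw [List.getD_eq_getElem σ 0 hi]; exact h i hi
  · intro h i hi
    have := h i hi
    rwa [List.getD_eq_getElem σ 0 hi] at this

lemma isOpen_cylL (σ : List ℕ) : IsOpen (cylL σ) := by
  rw [cylL_eq]
  exact isOpen_biInter_finset fun i _ => (continuous_apply i).isOpen_preimage _ (isOpen_discrete _)

lemma isClosed_cylL (σ : List ℕ) : IsClosed (cylL σ) := by
  rw [cylL_eq]
  exact isClosed_iInter fun i => isClosed_iInter fun _ =>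
    (isClosed_discrete _).preimage (continuous_apply i)

lemma cylL_pref_mem_nhds (q : ℕ → ℕ) (m : ℕ) : cylL (pref q m) ∈ 𝓝 q :=
  (isOpen_cylL _).mem_nhds (self_mem_cylL_pref q m)

lemma cylL_pref_subset (q : ℕ → ℕ) {m m' : ℕ} (h : m ≤ m') :
    cylL (pref q m') ⊆ cylL (pref q m) := fun x hx =>
  mem_cylL_pref.2 fun i hi => mem_cylL_pref.1 hx i (lt_of_lt_of_le hi h)

lemma pref_eq_of_mem {q' q : ℕ → ℕ} {m : ℕ} (h : q' ∈ cylL (pref q m)) {m' : ℕ} (hm : m' ≤ m) :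
    pref q' m' = pref q m' := by
  apply List.ext_getElem (by simp)
  intro i h1 h2
  have hi : i < m' := by simpa using h1
  rw [pref_getElem q' hi, pref_getElem q hi]
  exact mem_cylL_pref.1 h i (lt_of_lt_of_le hi hm)

lemma exists_cyl_subset {q : ℕ → ℕ} {s : Set (ℕ → ℕ)} (hs : s ∈ 𝓝 q) :
    ∃ m, cylL (pref q m) ⊆ s := by
  rw [nhds_pi, Filter.mem_pi] at hs
  obtain ⟨I, hIfin, t, ht, hsub⟩ := hs
  obtain ⟨M, hM⟩ := hIfin.bddAbove
  refine ⟨M + 1, fun x hx => hsub fun i hi => ?_⟩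
  have : x i = q i := mem_cylL_pref.1 hx i (Nat.lt_succ_of_le (hM hi))
  rw [this]
  exact mem_of_mem_nhds (ht i)

lemma tendsto_nat_iff {α : Type*} {l : Filter α} {F : α → ℕ} {n : ℕ} :
    Tendsto F l (𝓝 n) ↔ ∀ᶠ x in l, F x = n := by
  rw [nhds_discrete]; exact Filter.tendsto_pure

lemma continuousWithinAt_of_locally_const {X α : Type*} [TopologicalSpace X] [TopologicalSpace α]
    {F : X → α} {s : Set X} {p : X} {U : Set X} (hU : U ∈ 𝓝 p)
    (hconst : ∀ q ∈ U, q ∈ s → F q = F p) : ContinuousWithinAt F s p := by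
  apply Filter.Tendsto.congr' _ tendsto_const_nhds
  filter_upwards [mem_nhdsWithin_of_mem_nhds hU, self_mem_nhdsWithin] with q hq hqs
  exact (hconst q hq hqs).symm






lemma accn_not_cont : ¬ FOContinuous ACCN := by
  rintro ⟨F, hFc, hFs⟩
  set z : ℕ → ℕ := fun _ => 0 with hz
  have hzdom : z ∈ domFO ACCN := by
    intro h
    have : (0 : ℕ) ∈ ACCN z := ⟨fun i j hi _ => absurd rfl hi, fun k => by simp [hz]⟩
    rw [h] at this; exact this
  set n : ℕ := F z with hn
  set pseq : ℕ → (ℕ → ℕ) := fun m i => if i = m then n + 1 else 0 with hpseq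
  have hpdom : ∀ m, pseq m ∈ domFO ACCN := by
    intro m h
    have : (n + 1 : ℕ) ∈ ACCN (pseq m) := by
      constructor
      · intro i j hi hj
        simp only [hpseq] at hi hj ⊢
        split_ifs at hi hj ⊢ <;> simp_all
      · intro k
        simp only [hpseq]
        split_ifs <;> omega
    rw [h] at this; exact this
  have hconv : Tendsto pseq atTop (𝓝 z) := by
    rw [tendsto_pi_nhds]
    intro i
    rw [tendsto_nat_iff]
    filter_upwards [eventually_ge_atTop (i + 1)] with m hm
    simp only [hpseq]
    rw [if_neg (by omega)]
  have hconv' : Tendsto pseq atTop (𝓝[domFO ACCN] z) :=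
    tendsto_nhdsWithin_iff.2 ⟨hconv, Eventually.of_forall hpdom⟩
  have : Tendsto (fun m => F (pseq m)) atTop (𝓝 n) := (hFc z hzdom).tendsto.comp hconv'
  rw [tendsto_nat_iff] at this
  obtain ⟨m, hm⟩ := this.exists
  have hmem := hFs (pseq m) (hpdom m)
  have h2 := hmem.2 m
  have h1 : pseq m m = n + 1 := by simp [hpseq]
  rw [h1, hm] at h2
  exact h2 rfl



lemma exists_bad_seq {g : (ℕ → ℕ) → Set ℕ} (hg : ¬ FOContinuous g) :
    ∃ p, p ∈ domFO g ∧ ∃ pseq : ℕ → (ℕ → ℕ),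
      (∀ k, pseq k ∈ domFO g) ∧ Tendsto pseq atTop (𝓝 p) ∧
      ∀ n ∈ g p, {k | n ∉ g (pseq k)}.Infinite := by
  by_contra hcon
  push_neg at hcon
  apply hg
  have hM : ∀ p ∈ domFO g, ∃ n m, ∀ q ∈ cylL (pref p m), q ∈ domFO g → n ∈ g q := by
    intro p hp
    by_contra hM
    push_neg at hM
    choose Q hQ1 hQ2 hQ3 using hM
    set pseq : ℕ → (ℕ → ℕ) := fun k => Q (Nat.unpair k).1 k with hpseq
    have hconv : Tendsto pseq atTop (𝓝 p) := by
      intro s hs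
      obtain ⟨m, hm⟩ := exists_cyl_subset hs
      rw [Filter.mem_map]
      filter_upwards [eventually_ge_atTop m] with k hk
      exact hm (cylL_pref_subset p hk (hQ1 _ k))
    obtain ⟨n, hn, hfin⟩ := hcon p hp pseq (fun k => hQ2 _ k) hconv
    obtain ⟨N, hN⟩ := hfin.bddAbove
    set k := Nat.pair n (N + 1) with hk
    have hk2 : n ∈ g (pseq k) := by
      by_contra hc
      have hle : k ≤ N := hN hc
      have := Nat.right_le_pair n (N + 1)
      omega
    have : pseq k = Q n k := by simp [hpseq, hk, Nat.unpair_pair]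
    rw [this] at hk2
    exact hQ3 n k hk2
  choose! nn mm hMs using hM
  set dec : ℕ → List ℕ × ℕ :=
    fun i => (Denumerable.ofNat (List ℕ) (Nat.unpair i).1, (Nat.unpair i).2) with hdec
  set Good : ℕ → Prop :=
    fun i => ∀ q ∈ cylL (dec i).1, q ∈ domFO g → (dec i).2 ∈ g q with hGood
  have hex : ∀ p ∈ domFO g, ∃ i, p ∈ cylL (dec i).1 ∧ Good i := by
    intro p hp
    refine ⟨Nat.pair (Encodable.encode (pref p (mm p))) (nn p), ?_, ?_⟩
    · simp only [hdec, Nat.unpair_pair, Denumerable.ofNat_encode]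
      exact self_mem_cylL_pref p (mm p)
    · simp only [hGood, hdec, Nat.unpair_pair, Denumerable.ofNat_encode]
      exact hMs p hp
  set F : (ℕ → ℕ) → ℕ :=
    fun p => if h : ∃ i, p ∈ cylL (dec i).1 ∧ Good i then (dec (Nat.find h)).2 else 0 with hF
  refine ⟨F, ?_, ?_⟩
  · intro p hp
    obtain h := hex p hp
    set i₀ := Nat.find h with hi₀
    set U : Set (ℕ → ℕ) := cylL (dec i₀).1 ∩
      ⋂ i ∈ Finset.range i₀, (if Good i then (cylL (dec i).1)ᶜ else univ) with hU
    have hUopen : IsOpen U := by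
      refine IsOpen.inter (isOpen_cylL _) (isOpen_biInter_finset fun i _ => ?_)
      split_ifs
      · exact (isClosed_cylL _).isOpen_compl
      · exact isOpen_univ
    have hpU : p ∈ U := by
      refine ⟨(Nat.find_spec h).1, ?_⟩
      simp only [mem_iInter, Finset.mem_range]
      intro i hi
      split_ifs with hgi
      · intro hmem
        exact Nat.find_min h hi ⟨hmem, hgi⟩
      · trivial
    refine continuousWithinAt_of_locally_const (hUopen.mem_nhds hpU) ?_
    intro q hq _
    have hq' : ∃ i, q ∈ cylL (dec i).1 ∧ Good i := ⟨i₀, hq.1, (Nat.find_spec h).2⟩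
    have hfind : Nat.find hq' = i₀ := by
      refine le_antisymm (Nat.find_le ⟨hq.1, (Nat.find_spec h).2⟩) ?_
      by_contra hlt
      push_neg at hlt
      have hspec := Nat.find_spec hq'
      have hmem := hq.2
      simp only [mem_iInter, Finset.mem_range] at hmem
      have := hmem (Nat.find hq') hlt
      rw [if_pos hspec.2] at this
      exact this hspec.1
    simp only [hF]
    rw [dif_pos hq', dif_pos h, hfind]
  · intro p hp
    obtain h := hex p hp
    simp only [hF]
    rw [dif_pos h]
    exact (Nat.find_spec h).2 p (Nat.find_spec h).1 hp

lemma lemA {f : (ℕ → ℕ) → Set (ℕ → ℕ)}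
    (hex : ∃ g : (ℕ → ℕ) → Set ℕ, RedFO g f ∧ ¬ FOContinuous g) : DiscOnSeq f := by
  obtain ⟨g, ⟨H, K, hHc, hKc, hHdom, hKcor⟩, hg⟩ := hex
  obtain ⟨p, hp, pseq, hpdom, hpconv, hbad⟩ := exists_bad_seq hg
  have hconva : Tendsto (fun k => H (pseq k)) atTop (𝓝 (H p)) := by
    have h1 : Tendsto pseq atTop (𝓝[domFO g] p) :=
      tendsto_nhdsWithin_iff.2 ⟨hpconv, .of_forall hpdom⟩
    exact (hHc p hp).tendsto.comp h1
  refine ⟨H p, fun k => H (pseq k), hconva, hHdom p hp, fun k => hHdom _ (hpdom k), ?_⟩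
  rintro ⟨F, hFc, hFs⟩
  set a := H p with ha
  set aseq : ℕ → (ℕ → ℕ) := fun k => H (pseq k) with haseq
  have haS : a ∈ range aseq ∪ {a} := Or.inr rfl
  have hFa : F a ∈ f (H p) := hFs a haS
  set n := K (p, F a) with hn
  have hnp : n ∈ g p := hKcor p hp (F a) hFa
  have hinf := hbad n hnp
  have hFt : Tendsto (fun k => F (aseq k)) atTop (𝓝 (F a)) := by
    have h1 : Tendsto aseq atTop (𝓝[range aseq ∪ {a}] a) :=
      tendsto_nhdsWithin_iff.2 ⟨hconva, .of_forall fun k => Or.inl ⟨k, rfl⟩⟩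
    exact (hFc a haS).tendsto.comp h1
  have hprod : Tendsto (fun k => (pseq k, F (aseq k))) atTop
      (𝓝[{pq : (ℕ → ℕ) × (ℕ → ℕ) | pq.1 ∈ domFO g ∧ pq.2 ∈ f (H pq.1)}] (p, F a)) := by
    refine tendsto_nhdsWithin_iff.2 ⟨?_, .of_forall fun k => ⟨hpdom k, hFs (aseq k) (Or.inl ⟨k, rfl⟩)⟩⟩
    rw [nhds_prod_eq]
    exact hpconv.prodMk hFt
  have hKt := (hKc (p, F a) ⟨hp, hFa⟩).tendsto.comp hprod
  rw [tendsto_nat_iff] at hKt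
  obtain ⟨N, hN⟩ := eventually_atTop.1 hKt
  have hsub : {k | n ∉ g (pseq k)} ⊆ Iio N := by
    intro k hk
    by_contra hlt
    simp only [mem_Iio, not_lt] at hlt
    have h1 : K (pseq k, F (aseq k)) = n := hN k hlt
    have h2 : K (pseq k, F (aseq k)) ∈ g (pseq k) :=
      hKcor (pseq k) (hpdom k) (F (aseq k)) (hFs _ (Or.inl ⟨k, rfl⟩))
    rw [h1] at h2
    exact hk h2
  exact hinf ((finite_Iio N).subset hsub)


section LemB

variable (f : (ℕ → ℕ) → Set (ℕ → ℕ)) (a : ℕ → ℕ) (aseq : ℕ → ℕ → ℕ)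

def thinP (σ : List ℕ) : Prop := {k | f (aseq k) ∩ cylL σ = ∅}.Infinite

def gIdx (j n : ℕ) : ℕ :=
  if thinP f aseq (Denumerable.ofNat (List ℕ) n)
  then Nat.nth (fun k => f (aseq k) ∩ cylL (Denumerable.ofNat (List ℕ) n) = ∅) j
  else j

def Hfun (p : ℕ → ℕ) : ℕ → ℕ :=
  if h : ∃ i, p i ≠ 0 then aseq (gIdx f aseq (Nat.find h) (p (Nat.find h) - 1)) else a

def cP (q : ℕ → ℕ) : ℕ :=
  if h : ∃ m, thinP f aseq (pref q m) then Encodable.encode (pref q (Nat.find h)) else 0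

def eP (j n : ℕ) (q : ℕ → ℕ) : ℕ :=
  if h : ∃ m, m ≤ j ∧ thinP f aseq (pref q m) then
    (if Encodable.encode (pref q (Nat.find h)) = n then n + 1
     else Encodable.encode (pref q (Nat.find h)))
  else n + 1

def Kfun (pq : (ℕ → ℕ) × (ℕ → ℕ)) : ℕ :=
  if h : ∃ i, pq.1 i ≠ 0 then eP f aseq (Nat.find h) (pq.1 (Nat.find h) - 1) pq.2
  else cP f aseq pq.2

lemma gIdx_ge (j n : ℕ) : j ≤ gIdx f aseq j n := by
  unfold gIdx
  split_ifs with h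
  · exact (Nat.nth_strictMono h).le_apply
  · exact le_rfl

lemma gIdx_avoid {σ : List ℕ} (h : thinP f aseq σ) (j : ℕ) :
    f (aseq (gIdx f aseq j (Encodable.encode σ))) ∩ cylL σ = ∅ := by
  unfold gIdx
  rw [Denumerable.ofNat_encode]
  rw [if_pos h]
  exact Nat.nth_mem_of_infinite h j

lemma eP_ne (j n : ℕ) (q : ℕ → ℕ) : eP f aseq j n q ≠ n := by
  unfold eP
  split_ifs with h1 h2
  · omega
  · exact h2
  · omega

lemma eP_congr {j : ℕ} (n : ℕ) {q q' : ℕ → ℕ} (hq : ∀ m ≤ j, pref q' m = pref q m) :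
    eP f aseq j n q' = eP f aseq j n q := by
  by_cases h1 : ∃ m, m ≤ j ∧ thinP f aseq (pref q m)
  · have h2 : ∃ m, m ≤ j ∧ thinP f aseq (pref q' m) := by
      obtain ⟨m, hm, ht⟩ := h1
      exact ⟨m, hm, by rwa [hq m hm]⟩
    have hfind : Nat.find h2 = Nat.find h1 := by
      refine le_antisymm (Nat.find_le ?_) (Nat.find_le ?_)
      · obtain ⟨hm, ht⟩ := Nat.find_spec h1
        exact ⟨hm, by rwa [hq _ hm]⟩
      · obtain ⟨hm, ht⟩ := Nat.find_spec h2
        exact ⟨hm, by rwa [← hq _ hm]⟩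
    rw [eP, eP, dif_pos h2, dif_pos h1, hfind, hq _ (Nat.find_spec h1).1]
  · have h2 : ¬ ∃ m, m ≤ j ∧ thinP f aseq (pref q' m) := by
      intro ⟨m, hm, ht⟩
      exact h1 ⟨m, hm, by rwa [← hq m hm]⟩
    rw [eP, eP, dif_neg h2, dif_neg h1]

end LemB


section LemB2

variable {f : (ℕ → ℕ) → Set (ℕ → ℕ)} {a : ℕ → ℕ} {aseq : ℕ → ℕ → ℕ}

lemma cylL_pref_zero (q₀ x : ℕ → ℕ) : x ∈ cylL (pref q₀ 0) := by
  intro i h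
  simp [pref] at h

lemma b1 (hconv : Filter.Tendsto aseq Filter.atTop (nhds a))
    (hdom : ∀ n, aseq n ∈ domP f)
    (hno : ¬ ∃ F : (ℕ → ℕ) → (ℕ → ℕ),
        ContinuousOn F (Set.range aseq ∪ {a}) ∧
        ∀ x ∈ Set.range aseq ∪ {a}, F x ∈ f x)
    {q₀ : ℕ → ℕ} (hq₀ : q₀ ∈ f a) : ∃ m, thinP f aseq (pref q₀ m) := by
  by_contra hfat
  push_neg at hfat
  have hfat' : ∀ m, {k | f (aseq k) ∩ cylL (pref q₀ m) = ∅}.Finite := by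
    intro m
    have := hfat m
    rwa [thinP, Set.not_infinite] at this
  set S : Set (ℕ → ℕ) := Set.range aseq ∪ {a} with hS
  -- the number of the "last occurrence" of x in aseq
  set Kx : (ℕ → ℕ) → ℕ := fun x => sSup {k | aseq k = x} with hKx
  set P : (ℕ → ℕ) → ℕ → Prop := fun x m => (f x ∩ cylL (pref q₀ m)).Nonempty with hP
  set κ : (ℕ → ℕ) → ℕ := fun x => Nat.findGreatest (P x) (Kx x) with hκ
  set F : (ℕ → ℕ) → (ℕ → ℕ) := fun x =>
    if x = a then q₀ else if h : (f x ∩ cylL (pref q₀ (κ x))).Nonempty then h.some else q₀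
    with hF
  -- basic facts
  have hfin : ∀ x, x ≠ a → {k | aseq k = x}.Finite := by
    intro x hx
    have hev : ∀ᶠ k in Filter.atTop, aseq k ∈ ({x}ᶜ : Set (ℕ → ℕ)) :=
      hconv (isOpen_compl_singleton.mem_nhds (by simpa using (Ne.symm hx)))
    obtain ⟨N, hN⟩ := Filter.eventually_atTop.1 hev
    refine (Set.finite_Iio N).subset fun k hk => ?_
    by_contra hlt
    simp only [Set.mem_Iio, not_lt] at hlt
    exact (hN k hlt) hk
  have hP0 : ∀ k, P (aseq k) 0 := by
    intro k
    obtain ⟨y, hy⟩ := Set.nonempty_iff_ne_empty.2 (hdom k)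
    exact ⟨y, hy, cylL_pref_zero q₀ y⟩
  have hPκ : ∀ k, aseq k ≠ a → P (aseq k) (κ (aseq k)) := by
    intro k hk
    exact Nat.findGreatest_spec (Nat.zero_le _) (hP0 k)
  have hFmem : ∀ x ∈ S, F x ∈ f x := by
    intro x hx
    by_cases hxa : x = a
    · simp only [hF, if_pos hxa, hxa]
      exact hq₀
    · obtain ⟨k, hk⟩ : ∃ k, aseq k = x := by
        rcases hx with h | h
        · exact h
        · exact absurd h hxa
      have hne : (f x ∩ cylL (pref q₀ (κ x))).Nonempty := by
        rw [← hk]; exact hPκ k (hk ▸ hxa)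
      simp only [hF, if_neg hxa, dif_pos hne]
      exact hne.some_mem.1
  have hFa : F a = q₀ := by simp only [hF, if_pos rfl]
  -- continuity
  have hFc : ContinuousOn F S := by
    intro x hx
    by_cases hxa : x = a
    · subst hxa
      rw [ContinuousWithinAt, hFa]
      intro s hs
      obtain ⟨m, hm⟩ := exists_cyl_subset hs
      rw [Filter.mem_map]
      set X : Set (ℕ → ℕ) :=
        (aseq '' ({k | f (aseq k) ∩ cylL (pref q₀ m) = ∅} ∪ Set.Iio m)) \ {x} with hX
      have hXfin : X.Finite :=
        (((hfat' m).union (Set.finite_Iio m)).image aseq).diff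
      have hW : Xᶜ ∈ nhds x := hXfin.isClosed.isOpen_compl.mem_nhds (by simp [hX])
      filter_upwards [mem_nhdsWithin_of_mem_nhds hW, self_mem_nhdsWithin] with y hyW hyS
      apply hm
      by_cases hya : y = x
      · subst hya; rw [hFa]; exact self_mem_cylL_pref q₀ m
      · obtain ⟨k, hk⟩ : ∃ k, aseq k = y := by
          rcases hyS with h | h
          · exact h
          · exact absurd h hya
        have hnotim : y ∉ aseq '' ({k | f (aseq k) ∩ cylL (pref q₀ m) = ∅} ∪ Set.Iio m) := by
          intro hmem
          exact hyW ⟨hmem, hya⟩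
        have hgood : ∀ k', aseq k' = y →
            (f (aseq k') ∩ cylL (pref q₀ m) ≠ ∅ ∧ m ≤ k') := by
          intro k' hk'
          constructor
          · intro hc
            exact hnotim ⟨k', Or.inl hc, hk'⟩
          · by_contra hlt
            push_neg at hlt
            exact hnotim ⟨k', Or.inr hlt, hk'⟩
        have hPm : P y m := by
          rw [← hk]
          exact Set.nonempty_iff_ne_empty.2 ((hgood k hk).1 :)
        have hKxm : m ≤ Kx y := by
          refine le_trans (hgood k hk).2 (le_csSup ((hfin y hya).bddAbove) hk)
        have hκm : m ≤ κ y := Nat.le_findGreatest hKxm hPm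
        have hne : (f y ∩ cylL (pref q₀ (κ y))).Nonempty := by
          rw [← hk]; exact hPκ k (hk ▸ hya)
        simp only [hF, if_neg hya, dif_pos hne]
        exact cylL_pref_subset q₀ hκm hne.some_mem.2
    · -- isolated point
      obtain ⟨W₀, Wa, hW₀o, hWao, hxW₀, haWa, hdisj⟩ := t2_separation hxa
      have hev : ∀ᶠ k in Filter.atTop, aseq k ∈ Wa := hconv (hWao.mem_nhds haWa)
      obtain ⟨N, hN⟩ := Filter.eventually_atTop.1 hev
      set E : Set ℕ := {k | aseq k ∉ Wa} with hE
      have hEfin : E.Finite := by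
        refine (Set.finite_Iio N).subset fun k hk => ?_
        by_contra hlt
        simp only [Set.mem_Iio, not_lt] at hlt
        exact hk (hN k hlt)
      set bad : Set (ℕ → ℕ) := (aseq '' E) \ {x} with hbad
      have hbadfin : bad.Finite := ((hEfin.image aseq).diff)
      have hWnhds : (W₀ ∩ badᶜ) ∈ nhds x :=
        Filter.inter_mem (hW₀o.mem_nhds hxW₀)
          (hbadfin.isClosed.isOpen_compl.mem_nhds (by simp [hbad]))
      refine continuousWithinAt_of_locally_const hWnhds ?_
      rintro y ⟨hyW₀, hybad⟩ hyS
      have : y = x := by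
        by_cases hya : y = a
        · exfalso
          subst hya
          exact Set.disjoint_left.1 hdisj hyW₀ haWa
        · obtain ⟨k, hk⟩ : ∃ k, aseq k = y := by
            rcases hyS with h | h
            · exact h
            · exact absurd h hya
          by_cases hkE : k ∈ E
          · by_contra hyx
            exact hybad ⟨⟨k, hkE, hk⟩, hyx⟩
          · exfalso
            simp only [hE, Set.mem_setOf_eq, not_not] at hkE
            exact Set.disjoint_left.1 hdisj hyW₀ (hk ▸ hkE)
      rw [this]
  exact hno ⟨F, hFc, hFmem⟩

end LemB2


lemma lemB {f : (ℕ → ℕ) → Set (ℕ → ℕ)} (h : DiscOnSeq f) : RedFO ACCN f := by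
  obtain ⟨a, aseq, hconv, hadom, hseqdom, hno⟩ := h
  refine ⟨Hfun f a aseq, Kfun f aseq, ?_, ?_, ?_, ?_⟩
  · -- continuity of H
    intro p _
    by_cases h : ∃ i, p i ≠ 0
    · apply continuousWithinAt_of_locally_const (cylL_pref_mem_nhds p (Nat.find h + 1))
      intro p' hp' _
      have hagree : ∀ i ≤ Nat.find h, p' i = p i := fun i hi =>
        mem_cylL_pref.1 hp' i (Nat.lt_succ_of_le hi)
      have h' : ∃ i, p' i ≠ 0 := ⟨Nat.find h, by rw [hagree _ le_rfl]; exact Nat.find_spec h⟩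
      have hfind : Nat.find h' = Nat.find h := by
        refine le_antisymm (Nat.find_le (by rw [hagree _ le_rfl]; exact Nat.find_spec h)) ?_
        by_contra hlt
        push_neg at hlt
        have hs := Nat.find_spec h'
        rw [hagree _ hlt.le] at hs
        exact absurd hs (of_not_not (not_not_intro (Nat.find_min h hlt)))
      simp only [Hfun]
      rw [dif_pos h', dif_pos h, hfind, hagree _ le_rfl]
    · have hHp : Hfun f a aseq p = a := dif_neg h
      have hpz : ∀ i, p i = 0 := by push_neg at h; exact h
      rw [ContinuousWithinAt, hHp]
      intro s hs
      rw [Filter.mem_map]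
      obtain ⟨M, hM⟩ := Filter.mem_atTop_sets.1 (hconv hs)
      filter_upwards [mem_nhdsWithin_of_mem_nhds (cylL_pref_mem_nhds p M)] with p' hp'
      by_cases h' : ∃ i, p' i ≠ 0
      · simp only [Set.mem_preimage, Hfun]
        rw [dif_pos h']
        apply hM
        have hMf : M ≤ Nat.find h' := by
          by_contra hlt
          push_neg at hlt
          have := mem_cylL_pref.1 hp' _ hlt
          exact (Nat.find_spec h') (this.trans (hpz _))
        exact hMf.trans (gIdx_ge f aseq _ _)
      · simp only [Set.mem_preimage, Hfun]
        rw [dif_neg h']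
        exact mem_of_mem_nhds hs
  · -- continuity of K
    rintro ⟨p, q⟩ hpq
    by_cases h : ∃ i, p i ≠ 0
    · apply continuousWithinAt_of_locally_const
        (prod_mem_nhds (cylL_pref_mem_nhds p (Nat.find h + 1)) (cylL_pref_mem_nhds q (Nat.find h)))
      rintro ⟨p', q'⟩ ⟨hp', hq'⟩ _
      have hagree : ∀ i ≤ Nat.find h, p' i = p i := fun i hi =>
        mem_cylL_pref.1 hp' i (Nat.lt_succ_of_le hi)
      have h' : ∃ i, p' i ≠ 0 := ⟨Nat.find h, by rw [hagree _ le_rfl]; exact Nat.find_spec h⟩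
      have hfind : Nat.find h' = Nat.find h := by
        refine le_antisymm (Nat.find_le (by rw [hagree _ le_rfl]; exact Nat.find_spec h)) ?_
        by_contra hlt
        push_neg at hlt
        have hs := Nat.find_spec h'
        rw [hagree _ hlt.le] at hs
        exact absurd hs (of_not_not (not_not_intro (Nat.find_min h hlt)))
      show Kfun f aseq (p', q') = Kfun f aseq (p, q)
      simp only [Kfun]
      rw [dif_pos h', dif_pos h, hfind, hagree _ le_rfl]
      exact eP_congr f aseq _ (fun m hm => pref_eq_of_mem hq' hm)
    · have hpz : ∀ i, p i = 0 := by push_neg at h; exact h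
      have hKpq : Kfun f aseq (p, q) = cP f aseq q := by
        simp only [Kfun]; rw [dif_neg h]
      have hHp : Hfun f a aseq p = a := dif_neg h
      have hqa : q ∈ f a := by have := hpq.2; rwa [hHp] at this
      have hEx := b1 hconv hseqdom hno hqa
      set m₀ := Nat.find hEx with hm₀
      set σ₀ := pref q m₀ with hσ₀
      have hthin : thinP f aseq σ₀ := Nat.find_spec hEx
      have hmin : ∀ m < m₀, ¬ thinP f aseq (pref q m) := fun m hm => Nat.find_min hEx hm
      have hKval : Kfun f aseq (p, q) = Encodable.encode σ₀ := by
        rw [hKpq]; simp only [cP]; rw [dif_pos hEx]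
      apply continuousWithinAt_of_locally_const
        (prod_mem_nhds (cylL_pref_mem_nhds p m₀) (cylL_pref_mem_nhds q m₀))
      rintro ⟨p', q'⟩ ⟨hp', hq'⟩ hD
      have hqpref : ∀ m ≤ m₀, pref q' m = pref q m := fun m hm => pref_eq_of_mem hq' hm
      have hthin' : thinP f aseq (pref q' m₀) := by rw [hqpref m₀ le_rfl]; exact hthin
      have hmin' : ∀ m < m₀, ¬ thinP f aseq (pref q' m) := fun m hm => by
        rw [hqpref m hm.le]; exact hmin m hm
      by_cases h' : ∃ i, p' i ≠ 0
      · have hj' : m₀ ≤ Nat.find h' := by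
          by_contra hlt
          push_neg at hlt
          have := mem_cylL_pref.1 hp' _ hlt
          exact (Nat.find_spec h') (this.trans (hpz _))
        have hKp' : Kfun f aseq (p', q') =
            eP f aseq (Nat.find h') (p' (Nat.find h') - 1) q' := by
          simp only [Kfun]; rw [dif_pos h']
        have h2 : ∃ m, m ≤ Nat.find h' ∧ thinP f aseq (pref q' m) := ⟨m₀, hj', hthin'⟩
        have hfind2 : Nat.find h2 = m₀ := by
          refine le_antisymm (Nat.find_le ⟨hj', hthin'⟩) ?_
          by_contra hlt
          push_neg at hlt
          exact hmin' _ hlt (Nat.find_spec h2).2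
        have hpref2 : pref q' (Nat.find h2) = σ₀ := by rw [hfind2]; exact hqpref m₀ le_rfl
        by_cases hcase : Encodable.encode σ₀ = p' (Nat.find h') - 1
        · exfalso
          have hq'f : q' ∈ f (aseq (gIdx f aseq (Nat.find h') (p' (Nat.find h') - 1))) := by
            have hD2 := hD.2
            simp only [Hfun] at hD2
            rw [dif_pos h'] at hD2
            exact hD2
          rw [← hcase] at hq'f
          have hempty := gIdx_avoid f aseq hthin (Nat.find h')
          have hq'cyl : q' ∈ cylL σ₀ := hq'
          exact absurd hempty (Set.nonempty_iff_ne_empty.1 ⟨q', hq'f, hq'cyl⟩)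
        · rw [hKp', hKval]
          simp only [eP]
          rw [dif_pos h2, hpref2, if_neg hcase]
      · have hKp' : Kfun f aseq (p', q') = cP f aseq q' := by
          simp only [Kfun]; rw [dif_neg h']
        rw [hKp', hKval]
        have hEx' : ∃ m, thinP f aseq (pref q' m) := ⟨m₀, hthin'⟩
        simp only [cP]
        rw [dif_pos hEx']
        have hfind' : Nat.find hEx' = m₀ := by
          refine le_antisymm (Nat.find_le hthin') ?_
          by_contra hlt
          push_neg at hlt
          exact hmin' _ hlt (Nat.find_spec hEx')
        rw [hfind', hqpref m₀ le_rfl]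
  · -- H maps into dom f
    intro p _
    by_cases h : ∃ i, p i ≠ 0
    · simp only [Hfun]; rw [dif_pos h]; exact hseqdom _
    · simp only [Hfun]; rw [dif_neg h]; exact hadom
  · -- correctness
    intro p hp q _
    have hcond1 : ∀ i j, p i ≠ 0 → p j ≠ 0 → p i = p j := by
      obtain ⟨n, hn⟩ := Set.nonempty_iff_ne_empty.2 hp
      exact hn.1
    refine ⟨hcond1, ?_⟩
    intro k
    by_cases h : ∃ i, p i ≠ 0
    · have hK : Kfun f aseq (p, q) = eP f aseq (Nat.find h) (p (Nat.find h) - 1) q := by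
        simp only [Kfun]; rw [dif_pos h]
      rw [hK]
      by_cases hk : p k = 0
      · omega
      · have heq : p k = p (Nat.find h) := hcond1 k (Nat.find h) hk (Nat.find_spec h)
        have hv : p (Nat.find h) ≠ 0 := Nat.find_spec h
        have hne := eP_ne f aseq (Nat.find h) (p (Nat.find h) - 1) q
        omega
    · push_neg at h
      rw [h k]
      omega

end


theorem acc_least_discontinuous_first_order (f : (ℕ → ℕ) → Set (ℕ → ℕ)) :
    ((∃ g : (ℕ → ℕ) → Set ℕ, RedFO g f ∧ ¬ FOContinuous g) ↔ DiscOnSeq f) ∧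
    (DiscOnSeq f ↔ RedFO ACCN f) := by
  constructor
  · exact ⟨lemA, fun h => ⟨ACCN, lemB h, accn_not_cont⟩⟩
  · exact ⟨lemB, fun h => lemA ⟨ACCN, h, accn_not_cont⟩⟩
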